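/- Let A be an associative ℝ-algebra and J_1,…,J_r ∈ A pairwise commuting with J_l² = -1, and let e_P be defined as above for p ∈ P. Then e_P J_q = e_P J_p for every q ∈ P, and e_P J_q = -e_P J_p for every q ∉ P. -/

import Mathlib

/-- The idempotent `e_P = 2^{-(r-1)} ∏_{q∈P, q≠p}(1 - J_p J_q) ∏_{q∉P}(1 + J_p J_q)`
built from pairwise commuting elements `J_l` with `J_l² = -1` in a unital associative
`ℝ`-algebra `A`. -/
noncomputable def eP {A : Type*} [Ring A] [Algebra ℝ A] {r : ℕ} (J : Fin r → A)
    (hcomm : ∀ l m, Commute (J l) (J m)) (P : Finset (Fin r)) (p : Fin r) : A :=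
  (((2 : ℝ) ^ (r - 1))⁻¹) •
    ((P.erase p).noncommProd (fun q => 1 - J p * J q) (by
        intro a _ b _ _
        have h : Commute (J p * J a) (J p * J b) :=
          ((hcomm p p).mul_right (hcomm p b)).mul_left ((hcomm a p).mul_right (hcomm a b))
        exact (Commute.one_left (1 - J p * J b)).sub_left
          ((Commute.one_right (J p * J a)).sub_right h)) *
     (Pᶜ).noncommProd (fun q => 1 + J p * J q) (by
        intro a _ b _ _
        have h : Commute (J p * J a) (J p * J b) :=
          ((hcomm p p).mul_right (hcomm p b)).mul_left ((hcomm a p).mul_right (hcomm a b))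
        exact (Commute.one_left (1 + J p * J b)).add_left
          ((Commute.one_right (J p * J a)).add_right h)))

private lemma swap3 {A : Type*} [Ring A] (f a b j : A) (h1 : Commute j a)
    (h2 : Commute j b) : f * a * b * j = f * j * (a * b) := by
  calc f * a * b * j = f * (a * (b * j)) := by rw [mul_assoc, mul_assoc]
    _ = f * (a * (j * b)) := by rw [h2.eq]
    _ = f * ((a * j) * b) := by rw [mul_assoc]
    _ = f * ((j * a) * b) := by rw [h1.eq]
    _ = f * j * (a * b) := by rw [mul_assoc j a b, ← mul_assoc f j]

/-- `e_P J_q = e_P J_p` for `q ∈ P`, and `e_P J_q = -e_P J_p` for `q ∉ P`. -/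
theorem eP_mul_J {A : Type*} [Ring A] [Algebra ℝ A] {r : ℕ} (J : Fin r → A)
    (hcomm : ∀ l m, Commute (J l) (J m)) (hsq : ∀ l, J l * J l = -1)
    (P : Finset (Fin r)) (p : Fin r) (hp : p ∈ P) :
    (∀ q ∈ P, eP J hcomm P p * J q = eP J hcomm P p * J p) ∧
    (∀ q ∉ P, eP J hcomm P p * J q = -(eP J hcomm P p * J p)) := by
  classical
  have hfacm : ∀ (x q : Fin r), Commute (J x) (1 - J p * J q) := fun x q =>
    (Commute.one_right (J x)).sub_right ((hcomm x p).mul_right (hcomm x q))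
  have hfacp : ∀ (x q : Fin r), Commute (J x) (1 + J p * J q) := fun x q =>
    (Commute.one_right (J x)).add_right ((hcomm x p).mul_right (hcomm x q))
  have hkeym : ∀ q, (1 - J p * J q) * J q = (1 - J p * J q) * J p := by
    intro q
    calc (1 - J p * J q) * J q = J q - J p * (J q * J q) := by
          rw [sub_mul, one_mul, mul_assoc]
      _ = J p + J q := by rw [hsq q, mul_neg_one, sub_neg_eq_add, add_comm]
      _ = J p - J p * (J p * J q) := by
          rw [← mul_assoc, hsq p, neg_one_mul, sub_neg_eq_add]
      _ = J p - J p * (J q * J p) := by rw [(hcomm p q).eq]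
      _ = (1 - J p * J q) * J p := by rw [sub_mul, one_mul, mul_assoc]
  have hkeyp : ∀ q, (1 + J p * J q) * J q = -((1 + J p * J q) * J p) := by
    intro q
    calc (1 + J p * J q) * J q = J q + J p * (J q * J q) := by
          rw [add_mul, one_mul, mul_assoc]
      _ = -(J p - J q) := by rw [hsq q, mul_neg_one, neg_sub, ← sub_eq_add_neg]
      _ = -(J p + J p * (J p * J q)) := by
          rw [← mul_assoc, hsq p, neg_one_mul, ← sub_eq_add_neg]
      _ = -(J p + J p * (J q * J p)) := by rw [(hcomm p q).eq]
      _ = -((1 + J p * J q) * J p) := by rw [add_mul, one_mul, mul_assoc]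
  constructor
  · intro q hq
    rcases eq_or_ne q p with rfl | hqp
    · rfl
    · have hq' : q ∈ P.erase p := Finset.mem_erase.mpr ⟨hqp, hq⟩
      rw [eP, smul_mul_assoc, smul_mul_assoc]
      congr 1
      set B := (Pᶜ).noncommProd (fun q => 1 + J p * J q) (by
        intro a _ b _ _
        exact (Commute.one_left (1 + J p * J b)).add_left ((Commute.one_right (J p * J a)).add_right (((hcomm p p).mul_right (hcomm p b)).mul_left ((hcomm a p).mul_right (hcomm a b))))) with hB
      have hJB : ∀ x, Commute (J x) B :=
        fun x => Finset.noncommProd_commute _ _ _ _ (fun y _ => hfacp x y)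
      have hc0 : ((P.erase p : Finset (Fin r)) : Set (Fin r)).Pairwise (Function.onFun Commute fun q => 1 - J p * J q) := by
        intro a _ b _ _
        exact (Commute.one_left (1 - J p * J b)).sub_left ((Commute.one_right (J p * J a)).sub_right (((hcomm p p).mul_right (hcomm p b)).mul_left ((hcomm a p).mul_right (hcomm a b))))
      set a0 := (P.erase p).noncommProd (fun q => 1 - J p * J q) hc0 with ha0
      rw [ha0, ← Finset.mul_noncommProd_erase (P.erase p) hq' (fun q => 1 - J p * J q)]
      set a := ((P.erase p).erase q).noncommProd (fun q => 1 - J p * J q) (by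
        intro a _ b _ _
        exact (Commute.one_left (1 - J p * J b)).sub_left ((Commute.one_right (J p * J a)).sub_right (((hcomm p p).mul_right (hcomm p b)).mul_left ((hcomm a p).mul_right (hcomm a b))))) with ha
      have hJa : ∀ x, Commute (J x) a :=
        fun x => Finset.noncommProd_commute _ _ _ _ (fun y _ => hfacm x y)
      rw [swap3 _ a B (J q) (hJa q) (hJB q), swap3 _ a B (J p) (hJa p) (hJB p), hkeym q]
  · intro q hq
    have hq' : q ∈ Pᶜ := Finset.mem_compl.mpr hq
    rw [eP, smul_mul_assoc, smul_mul_assoc]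
    rw [← smul_neg]
    congr 1
    set a := (P.erase p).noncommProd (fun q => 1 - J p * J q) (by
        intro a _ b _ _
        exact (Commute.one_left (1 - J p * J b)).sub_left ((Commute.one_right (J p * J a)).sub_right (((hcomm p p).mul_right (hcomm p b)).mul_left ((hcomm a p).mul_right (hcomm a b))))) with ha
    have hJa : ∀ x, Commute (J x) a :=
      fun x => Finset.noncommProd_commute _ _ _ _ (fun y _ => hfacm x y)
    have hc0 : ((Pᶜ : Finset (Fin r)) : Set (Fin r)).Pairwise (Function.onFun Commute fun q => 1 + J p * J q) := by
        intro a _ b _ _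
        exact (Commute.one_left (1 + J p * J b)).add_left ((Commute.one_right (J p * J a)).add_right (((hcomm p p).mul_right (hcomm p b)).mul_left ((hcomm a p).mul_right (hcomm a b))))
    set B0 := (Pᶜ).noncommProd (fun q => 1 + J p * J q) hc0 with hB0
    rw [hB0, ← Finset.mul_noncommProd_erase (Pᶜ) hq' (fun q => 1 + J p * J q)]
    set B := ((Pᶜ).erase q).noncommProd (fun q => 1 + J p * J q) (by
        intro a _ b _ _
        exact (Commute.one_left (1 + J p * J b)).add_left ((Commute.one_right (J p * J a)).add_right (((hcomm p p).mul_right (hcomm p b)).mul_left ((hcomm a p).mul_right (hcomm a b))))) with hB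
    have hJB : ∀ x, Commute (J x) B :=
      fun x => Finset.noncommProd_commute _ _ _ _ (fun y _ => hfacp x y)
    -- goal : a * ((1 + JpJq) * B) * J q = -(a * ((1 + JpJq) * B) * J p)
    have h1 : ∀ j : Fin r, a * ((1 + J p * J q) * B) * J j
        = a * (1 + J p * J q) * J j * B := by
      intro j
      rw [← mul_assoc, mul_assoc (a * (1 + J p * J q)) B (J j), ← (hJB j).eq,
        ← mul_assoc]
    rw [h1, h1, mul_assoc a (1 + J p * J q) (J q), hkeyp q, mul_neg, neg_mul,
      mul_assoc a (1 + J p * J q) (J p)]
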